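/- Let 1/2 ≤ α ≤ 1 and 1/2 ≤ β < 1. Then the function φ : ℝ → ℝ defined by φ(t) = H_α(e^{2t}, 1) / M_β(e^{2t}, 1) for t ≠ 0 and φ(0) = 1 is positive definite. In particular this holds for α = 1/m and β = m/(m+1) when m ∈ {1, 2}. -/

import Mathlib

open scoped ComplexOrder

/-- Logarithmic mean. -/
noncomputable def LM (x y : ℝ) : ℝ :=
  if x = y then x else (x - y) / (Real.log x - Real.log y)

/-- The mean `A_α`, with `A_0 = LM`. -/
noncomputable def Amean (α x y : ℝ) : ℝ :=
  if x = y then x else if α = 0 then LM x y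
  else α * (x ^ α + y ^ α) * (x - y) / (2 * (x ^ α - y ^ α))

/-- The mean `G_α`, with `G_0 = LM`. -/
noncomputable def Gmean (α x y : ℝ) : ℝ :=
  if x = y then x else if α = 0 then LM x y
  else α * (x * y) ^ (α / 2) * (x - y) / (x ^ α - y ^ α)

/-- The mean `H_α`, with `H_0 = LM`. -/
noncomputable def Hmean (α x y : ℝ) : ℝ :=
  if x = y then x else if α = 0 then LM x y
  else 2 * α * (x * y) ^ α * (x - y) / ((x ^ α + y ^ α) * (x ^ α - y ^ α))

/-- The power difference mean `M_α`. -/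
noncomputable def Mmean (α x y : ℝ) : ℝ :=
  if x = y then x
  else ((α - 1) / α) * (x ^ α - y ^ α) / (x ^ (α - 1) - y ^ (α - 1))

/-- A continuous real function `φ` is positive definite if every matrix
`[φ(tᵢ - tⱼ)]` is positive semidefinite (as a complex matrix). -/
def IsPosDefFun (φ : ℝ → ℝ) : Prop :=
  Continuous φ ∧ ∀ (n : ℕ) (t : Fin n → ℝ),
    Matrix.PosSemidef (Matrix.of fun i j : Fin n => (φ (t i - t j) : ℂ))

open scoped ComplexOrder Matrix Real
open MeasureTheory Filter

namespace St14


/-- positive-definiteness (matrix part only) -/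
def PD (f : ℝ → ℝ) : Prop := ∀ (n : ℕ) (t : Fin n → ℝ),
  Matrix.PosSemidef (Matrix.of fun i j : Fin n => (f (t i - t j) : ℂ))

/-- Schur product theorem. -/
theorem schur {n : ℕ} {A B : Matrix (Fin n) (Fin n) ℂ} (hA : A.PosSemidef)
    (hB : B.PosSemidef) : Matrix.PosSemidef (Matrix.of fun i j => A i j * B i j) := by
  obtain ⟨C, hC⟩ : ∃ C : Matrix (Fin n) (Fin n) ℂ, A = Cᴴ * C := by
    open scoped MatrixOrder in
    obtain ⟨C, hC⟩ := CStarAlgebra.nonneg_iff_eq_star_mul_self.mp hA.nonneg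
    exact ⟨C, hC⟩
  rw [Matrix.posSemidef_iff_dotProduct_mulVec]
  constructor
  · ext i j
    simp only [Matrix.conjTranspose_apply, Matrix.of_apply, star_mul']
    rw [show (star (A j i) : ℂ) = A i j from congrFun (congrFun hA.1 i) j ▸ rfl,
      show (star (B j i) : ℂ) = B i j from congrFun (congrFun hB.1 i) j ▸ rfl]
  · intro x
    have e1 : dotProduct (star x)
        (Matrix.mulVec (Matrix.of (fun i j => A i j * B i j)) x)
        = ∑ i, ∑ k, ∑ j, ((starRingEnd ℂ) (C k i) * (starRingEnd ℂ) (x i)) *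
            (B i j * (C k j * x j)) := by
      simp only [dotProduct, Matrix.mulVec, Matrix.of_apply, Pi.star_apply,
        RCLike.star_def, Finset.mul_sum]
      refine Finset.sum_congr rfl fun i _ => ?_
      rw [Finset.sum_comm]
      refine Finset.sum_congr rfl fun j _ => ?_
      rw [hC, Matrix.mul_apply]
      simp only [Matrix.conjTranspose_apply, RCLike.star_def, Finset.sum_mul, Finset.mul_sum]
      exact Finset.sum_congr rfl fun k _ => by ring
    have e2 : ∀ k, dotProduct (star (fun j => C k j * x j))
        (Matrix.mulVec B (fun j => C k j * x j))
        = ∑ i, ∑ j, ((starRingEnd ℂ) (C k i) * (starRingEnd ℂ) (x i)) *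
            (B i j * (C k j * x j)) := by
      intro k
      simp only [dotProduct, Matrix.mulVec, Pi.star_apply, RCLike.star_def,
        Finset.mul_sum, map_mul]
      try exact Finset.sum_congr rfl fun i _ => Finset.sum_congr rfl fun j _ => by ring
    calc dotProduct (star x)
          (Matrix.mulVec (Matrix.of (fun i j => A i j * B i j)) x)
        = ∑ k, ∑ i, ∑ j, ((starRingEnd ℂ) (C k i) * (starRingEnd ℂ) (x i)) *
            (B i j * (C k j * x j)) := by rw [e1, Finset.sum_comm]
      _ = ∑ k, dotProduct (star (fun j => C k j * x j))
            (Matrix.mulVec B (fun j => C k j * x j)) :=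
          Finset.sum_congr rfl fun k _ => (e2 k).symm
      _ ≥ 0 := Finset.sum_nonneg fun k _ => hB.dotProduct_mulVec_nonneg _

theorem PD.mul {f g : ℝ → ℝ} (hf : PD f) (hg : PD g) : PD (fun t => f t * g t) := by
  intro n t
  have := schur (hf n t) (hg n t)
  convert this using 2
  simp

theorem PD.add {f g : ℝ → ℝ} (hf : PD f) (hg : PD g) : PD (fun t => f t + g t) := by
  intro n t
  have h := (hf n t).add (hg n t)
  have he : (Matrix.of fun i j : Fin n => (((fun s => f s + g s) (t i - t j) : ℝ) : ℂ))
      = (Matrix.of fun i j : Fin n => (f (t i - t j) : ℂ))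
        + (Matrix.of fun i j : Fin n => (g (t i - t j) : ℂ)) := by
    ext i j
    simp [Matrix.add_apply]
  rw [he]
  exact h

theorem PD.const {c : ℝ} (hc : 0 ≤ c) : PD (fun _ => c) := by
  intro n t
  rw [Matrix.posSemidef_iff_dotProduct_mulVec]
  constructor
  · ext i j
    simp [Matrix.conjTranspose_apply]
  · intro x
    have : dotProduct (star x) (Matrix.mulVec (Matrix.of fun _ _ : Fin n => (c : ℂ)) x)
        = (c : ℂ) * ((starRingEnd ℂ) (∑ i, x i) * (∑ i, x i)) := by
      simp only [dotProduct, Matrix.mulVec, Matrix.of_apply, Pi.star_apply,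
        RCLike.star_def, map_sum, Finset.sum_mul, Finset.mul_sum]
      conv_rhs => rw [Finset.sum_comm]
      exact Finset.sum_congr rfl fun i _ => Finset.sum_congr rfl fun j _ => by ring
    rw [this]
    have h1 : (0:ℂ) ≤ (c : ℂ) := by exact_mod_cast hc
    exact mul_nonneg h1 (star_mul_self_nonneg _)

theorem PD.scale {f : ℝ → ℝ} (hf : PD f) (c : ℝ) : PD (fun t => f (c * t)) := by
  intro n t
  have := hf n (fun i => c * t i)
  convert this using 2
  ext i j
  simp [mul_sub]

theorem PD.limit {F : ℕ → ℝ → ℝ} {f : ℝ → ℝ} (hF : ∀ N, PD (F N))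
    (hconv : ∀ t, Filter.Tendsto (fun N => F N t) Filter.atTop (nhds (f t))) : PD f := by
  intro n t
  have hent : ∀ i j : Fin n, Filter.Tendsto (fun N => ((F N (t i - t j) : ℂ)))
      Filter.atTop (nhds ((f (t i - t j) : ℂ))) := by
    intro i j
    exact Complex.continuous_ofReal.continuousAt.tendsto.comp (hconv _)
  rw [Matrix.posSemidef_iff_dotProduct_mulVec]
  constructor
  · ext i j
    have h2 : ∀ N, (starRingEnd ℂ) ((F N (t j - t i) : ℂ)) = ((F N (t i - t j) : ℂ)) := by
      intro N
      have h3 := congrFun (congrFun (hF N n t).1 i) j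
      simpa [Matrix.conjTranspose_apply] using h3
    have h1 : Filter.Tendsto (fun N => ((F N (t i - t j) : ℂ)))
        Filter.atTop (nhds ((starRingEnd ℂ) ((f (t j - t i) : ℂ)))) :=
      Filter.Tendsto.congr h2
        ((Complex.continuous_conj.continuousAt.tendsto).comp (hent j i))
    have := tendsto_nhds_unique h1 (hent i j)
    simpa [Matrix.conjTranspose_apply] using this
  · intro x
    set M : Matrix (Fin n) (Fin n) ℂ := Matrix.of fun i j : Fin n => (f (t i - t j) : ℂ)
    set MN : ℕ → Matrix (Fin n) (Fin n) ℂ :=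
      fun N => Matrix.of fun i j : Fin n => (F N (t i - t j) : ℂ)
    have hQ : Filter.Tendsto (fun N => dotProduct (star x) (Matrix.mulVec (MN N) x))
        Filter.atTop (nhds (dotProduct (star x) (Matrix.mulVec M x))) := by
      simp only [dotProduct, Matrix.mulVec, Matrix.of_apply, M, MN]
      refine tendsto_finset_sum _ fun i _ => ?_
      exact ((tendsto_finset_sum _ fun j _ =>
        ((hent i j).mul tendsto_const_nhds)).const_mul _)
    have hpos : ∀ N, 0 ≤ dotProduct (star x) (Matrix.mulVec (MN N) x) :=
      fun N => (hF N n t).dotProduct_mulVec_nonneg x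
    rw [Complex.nonneg_iff]
    constructor
    · exact ge_of_tendsto ((Complex.continuous_re.continuousAt.tendsto).comp hQ)
        (Filter.Eventually.of_forall fun N => (Complex.nonneg_iff.mp (hpos N)).1)
    · exact tendsto_nhds_unique
        (Filter.Tendsto.congr (fun N => (Complex.nonneg_iff.mp (hpos N)).2)
          tendsto_const_nhds)
        ((Complex.continuous_im.continuousAt.tendsto).comp hQ)



lemma integ (s : ℝ) :
    IntegrableOn (fun u => Real.exp (-u) * Real.cos (s*u)) (Set.Ioi (0:ℝ)) := by
  have h0 : IntegrableOn (fun u : ℝ => Real.exp (-1*u)) (Set.Ioi (0:ℝ)) :=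
    exp_neg_integrableOn_Ioi 0 one_pos
  refine h0.integrable.mono' ?_ ?_
  · exact ((Real.continuous_exp.comp continuous_neg).mul
      (Real.continuous_cos.comp (continuous_const.mul continuous_id))).aestronglyMeasurable
  · refine Filter.Eventually.of_forall fun u => ?_
    have h1 : |Real.cos (s*u)| ≤ 1 := Real.abs_cos_le_one _
    have h2 : 0 ≤ Real.exp (-u) := (Real.exp_pos _).le
    calc ‖Real.exp (-u) * Real.cos (s*u)‖ = Real.exp (-u) * |Real.cos (s*u)| := by
          rw [Real.norm_eq_abs, abs_mul, abs_of_nonneg h2]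
      _ ≤ Real.exp (-u) * 1 := by gcongr
      _ = Real.exp (-1*u) := by rw [mul_one, neg_one_mul]

lemma cos_integral (s : ℝ) :
    ∫ u in Set.Ioi (0:ℝ), Real.exp (-u) * Real.cos (s*u) = 1/(1+s^2) := by
  have hs : (0:ℝ) < 1 + s^2 := by positivity
  set F : ℝ → ℝ := fun u => Real.exp (-u) * (s * Real.sin (s*u) - Real.cos (s*u)) / (1+s^2)
    with hF
  have hderiv : ∀ u ∈ Set.Ici (0:ℝ), HasDerivAt F (Real.exp (-u) * Real.cos (s*u)) u := by
    intro u _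
    have h1 : HasDerivAt (fun u : ℝ => -u) (-1) u := (hasDerivAt_id u).neg
    have h2 : HasDerivAt (fun u : ℝ => Real.exp (-u)) (Real.exp (-u) * (-1)) u := h1.exp
    have h3 : HasDerivAt (fun u : ℝ => s*u) s u := by
      simpa using (hasDerivAt_id u).const_mul s
    have h4 : HasDerivAt (fun u : ℝ => Real.sin (s*u)) (Real.cos (s*u) * s) u := h3.sin
    have h5 : HasDerivAt (fun u : ℝ => Real.cos (s*u)) (-Real.sin (s*u) * s) u := h3.cos
    have h6 := ((h2.mul ((h4.const_mul s).sub h5)).div_const (1+s^2))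
    refine h6.congr_deriv ?_
    simp only [Pi.sub_apply]
    field_simp
    ring
  have htend : Tendsto F atTop (nhds 0) := by
    have hb : ∀ u : ℝ, ‖F u‖ ≤ ((|s|+1)/(1+s^2)) * Real.exp (-u) := by
      intro u
      have h1 : |s * Real.sin (s*u) - Real.cos (s*u)| ≤ |s| + 1 := by
        calc |s * Real.sin (s*u) - Real.cos (s*u)|
            ≤ |s * Real.sin (s*u)| + |Real.cos (s*u)| := abs_sub _ _
          _ ≤ |s| * 1 + 1 := by
              rw [abs_mul]
              gcongr
              · exact Real.abs_sin_le_one _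
              · exact Real.abs_cos_le_one _
          _ = |s| + 1 := by ring
      have h2 : 0 ≤ Real.exp (-u) := (Real.exp_pos _).le
      rw [hF, Real.norm_eq_abs, abs_div, abs_of_pos hs, abs_mul, abs_of_nonneg h2]
      rw [div_le_iff₀ hs] at *
      calc Real.exp (-u) * |s * Real.sin (s*u) - Real.cos (s*u)|
          ≤ Real.exp (-u) * (|s|+1) := by gcongr
        _ = (|s|+1)/(1+s^2) * Real.exp (-u) * (1+s^2) := by field_simp
    have h0 : Tendsto (fun u : ℝ => ((|s|+1)/(1+s^2)) * Real.exp (-u)) atTop (nhds 0) := by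
      simpa using (Real.tendsto_exp_neg_atTop_nhds_zero.const_mul ((|s|+1)/(1+s^2)))
    exact squeeze_zero_norm hb h0
  have := integral_Ioi_of_hasDerivAt_of_tendsto' hderiv (integ s) htend
  rw [this, hF]
  simp
  ring


theorem PD_base : PD (fun t => 1/(1+t^2)) := by
  intro n t
  rw [Matrix.posSemidef_iff_dotProduct_mulVec]
  constructor
  · ext i j
    have h : (t j - t i)^2 = (t i - t j)^2 := by ring
    simp only [Matrix.conjTranspose_apply, Matrix.of_apply, RCLike.star_def,
      Complex.conj_ofReal, h]
  · intro x
    classical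
    set T : ℝ → ℂ := fun u => ∑ j, x j * Complex.exp (-((u * t j : ℝ) : ℂ) * Complex.I)
      with hT
    set S : ℝ → ℂ := fun u => ∑ j, x j * Complex.exp (((u * t j : ℝ) : ℂ) * Complex.I)
      with hS
    set W : ℝ → ℝ := fun u => Real.exp (-u) * ((Complex.normSq (T u) + Complex.normSq (S u))/2) with hW
    have hconjT : ∀ u, (starRingEnd ℂ) (T u)
        = ∑ i, (starRingEnd ℂ) (x i) * Complex.exp (((u * t i : ℝ) : ℂ) * Complex.I) := by
      intro u
      rw [hT, map_sum]
      refine Finset.sum_congr rfl fun i _ => ?_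
      rw [map_mul, ← Complex.exp_conj]
      congr 1
      simp [Complex.conj_I]
    have hconjS : ∀ u, (starRingEnd ℂ) (S u)
        = ∑ i, (starRingEnd ℂ) (x i) * Complex.exp (-((u * t i : ℝ) : ℂ) * Complex.I) := by
      intro u
      rw [hS, map_sum]
      refine Finset.sum_congr rfl fun i _ => ?_
      rw [map_mul, ← Complex.exp_conj]
      congr 1
      simp [Complex.conj_I]
    have hpt : ∀ u : ℝ, (∑ i, ∑ j, ((starRingEnd ℂ) (x i) * x j) *
        ((Real.exp (-u) * Real.cos ((t i - t j)*u) : ℝ) : ℂ)) = ((W u : ℝ) : ℂ) := by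
      intro u
      have hcos : ∀ s : ℝ, ((Real.cos s : ℝ) : ℂ)
          = (Complex.exp ((s:ℂ)*Complex.I) + Complex.exp (-(s:ℂ)*Complex.I))/2 := by
        intro s
        rw [Complex.ofReal_cos, eq_div_iff (two_ne_zero' ℂ), mul_comm, Complex.two_cos]
      have eT : (starRingEnd ℂ) (T u) * T u
          = ∑ i, ∑ j, ((starRingEnd ℂ) (x i) * x j)
              * Complex.exp ((((t i - t j) * u : ℝ) : ℂ) * Complex.I) := by
        rw [hconjT u, hT, Finset.sum_mul_sum]
        refine Finset.sum_congr rfl fun i _ => Finset.sum_congr rfl fun j _ => ?_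
        rw [mul_mul_mul_comm, ← Complex.exp_add]
        congr 2
        push_cast
        ring
      have eS : (starRingEnd ℂ) (S u) * S u
          = ∑ i, ∑ j, ((starRingEnd ℂ) (x i) * x j)
              * Complex.exp (-(((t i - t j) * u : ℝ) : ℂ) * Complex.I) := by
        rw [hconjS u, hS, Finset.sum_mul_sum]
        refine Finset.sum_congr rfl fun i _ => Finset.sum_congr rfl fun j _ => ?_
        rw [mul_mul_mul_comm, ← Complex.exp_add]
        congr 2
        push_cast
        ring
      have hW' : ((W u : ℝ) : ℂ) = (((Real.exp (-u) : ℝ) : ℂ)/2) *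
          ((starRingEnd ℂ) (T u) * T u + (starRingEnd ℂ) (S u) * S u) := by
        rw [mul_comm ((starRingEnd ℂ) (T u)), mul_comm ((starRingEnd ℂ) (S u)),
          Complex.mul_conj, Complex.mul_conj, hW]
        push_cast
        ring
      rw [hW', eT, eS, ← Finset.sum_add_distrib, Finset.mul_sum]
      refine Finset.sum_congr rfl fun i _ => ?_
      rw [← Finset.sum_add_distrib, Finset.mul_sum]
      refine Finset.sum_congr rfl fun j _ => ?_
      rw [Complex.ofReal_mul, hcos ((t i - t j)*u)]
      ring
    have hQF : dotProduct (star x)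
        (Matrix.mulVec (Matrix.of fun i j : Fin n => ((1/(1+(t i - t j)^2) : ℝ) : ℂ)) x)
        = ∑ i, ∑ j, ((starRingEnd ℂ) (x i) * x j) * ((1/(1+(t i - t j)^2) : ℝ) : ℂ) := by
      simp only [dotProduct, Matrix.mulVec, Matrix.of_apply, Pi.star_apply,
        RCLike.star_def, Finset.mul_sum]
      exact Finset.sum_congr rfl fun i _ => Finset.sum_congr rfl fun j _ => by ring
    have hInt : ∀ (a : ℂ) (s : ℝ), Integrable
        (fun u => a * ((Real.exp (-u) * Real.cos (s*u) : ℝ) : ℂ))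
        (MeasureTheory.volume.restrict (Set.Ioi 0)) :=
      fun a s => ((integ s).ofReal.const_mul a)
    have key : dotProduct (star x)
        (Matrix.mulVec (Matrix.of fun i j : Fin n => ((1/(1+(t i - t j)^2) : ℝ) : ℂ)) x)
        = ((∫ u in Set.Ioi (0:ℝ), W u : ℝ) : ℂ) := by
      rw [hQF]
      calc ∑ i, ∑ j, ((starRingEnd ℂ) (x i) * x j) * ((1/(1+(t i - t j)^2) : ℝ) : ℂ)
          = ∑ i, ∑ j, ∫ u in Set.Ioi (0:ℝ), ((starRingEnd ℂ) (x i) * x j) *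
              ((Real.exp (-u) * Real.cos ((t i - t j)*u) : ℝ) : ℂ) := by
            refine Finset.sum_congr rfl fun i _ => Finset.sum_congr rfl fun j _ => ?_
            rw [integral_const_mul]
            congr 1
            rw [← cos_integral (t i - t j)]
            exact integral_ofReal.symm
        _ = ∫ u in Set.Ioi (0:ℝ), ∑ i, ∑ j, ((starRingEnd ℂ) (x i) * x j) *
              ((Real.exp (-u) * Real.cos ((t i - t j)*u) : ℝ) : ℂ) := by
            have step1 : ∀ i : Fin n, (∑ j, ∫ u in Set.Ioi (0:ℝ),
                ((starRingEnd ℂ) (x i) * x j) *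
                ((Real.exp (-u) * Real.cos ((t i - t j)*u) : ℝ) : ℂ))
                = ∫ u in Set.Ioi (0:ℝ), ∑ j, ((starRingEnd ℂ) (x i) * x j) *
                  ((Real.exp (-u) * Real.cos ((t i - t j)*u) : ℝ) : ℂ) :=
              fun i => (MeasureTheory.integral_finset_sum _ fun j _ => hInt _ _).symm
            rw [Finset.sum_congr rfl fun i _ => step1 i,
              ← MeasureTheory.integral_finset_sum]
            exact fun i _ => MeasureTheory.integrable_finset_sum _ fun j _ => hInt _ _
        _ = ∫ u in Set.Ioi (0:ℝ), ((W u : ℝ) : ℂ) :=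
            MeasureTheory.integral_congr_ae (Filter.Eventually.of_forall fun u => hpt u)
        _ = ((∫ u in Set.Ioi (0:ℝ), W u : ℝ) : ℂ) := integral_ofReal
    rw [key]
    have hWnn : 0 ≤ ∫ u in Set.Ioi (0:ℝ), W u :=
      MeasureTheory.setIntegral_nonneg measurableSet_Ioi fun u _ => by
        rw [hW]
        have := Complex.normSq_nonneg (T u)
        have := Complex.normSq_nonneg (S u)
        positivity
    rw [Complex.nonneg_iff]
    constructor
    · simpa using hWnn
    · simp



lemma euler_sinh (s : ℝ) : Tendsto
    (fun n : ℕ => s * ∏ j ∈ Finset.range n, (1 + s^2/(((j:ℝ)+1)^2*Real.pi^2)))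
    atTop (nhds (Real.sinh s)) := by
  set z : ℂ := ((s : ℂ)/(Real.pi : ℂ)) * Complex.I with hz
  have hπ : ((Real.pi : ℝ) : ℂ) ≠ 0 := by
    exact_mod_cast Real.pi_ne_zero
  have h0 := Complex.tendsto_euler_sin_prod z
  have hπz : (Real.pi : ℂ) * z = (s : ℂ) * Complex.I := by
    rw [hz]; field_simp
  have hsin : Complex.sin ((Real.pi : ℂ) * z) = Complex.sinh (s : ℂ) * Complex.I := by
    rw [hπz, Complex.sin_mul_I]
  rw [hsin] at h0
  have hterm : ∀ (j : ℕ), (1 : ℂ) - z^2/((j:ℂ)+1)^2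
      = ((1 + s^2/(((j:ℝ)+1)^2*Real.pi^2) : ℝ) : ℂ) := by
    intro j
    have hj' : ((j:ℝ)+1) ≠ 0 := by positivity
    have hj : ((j:ℂ)+1) ≠ 0 := by exact_mod_cast hj'
    rw [hz]
    push_cast
    rw [mul_pow, Complex.I_sq]
    field_simp
    ring
  have h2 : Tendsto (fun n : ℕ =>
      (((s * ∏ j ∈ Finset.range n, (1 + s^2/(((j:ℝ)+1)^2*Real.pi^2)) : ℝ)) : ℂ)
        * Complex.I) atTop (nhds (Complex.sinh (s : ℂ) * Complex.I)) := by
    refine h0.congr fun n => ?_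
    rw [hπz, Finset.prod_congr rfl (fun j _ => hterm j)]
    push_cast
    ring
  have h3 := h2.mul_const (-Complex.I)
  have h4 : Tendsto (fun n : ℕ =>
      (((s * ∏ j ∈ Finset.range n, (1 + s^2/(((j:ℝ)+1)^2*Real.pi^2)) : ℝ)) : ℂ))
      atTop (nhds (Complex.sinh (s : ℂ))) := by
    have e1 : ∀ w : ℂ, w * Complex.I * -Complex.I = w := by
      intro w
      rw [mul_assoc, mul_neg, Complex.I_mul_I]
      simp
    simpa only [e1] using h3
  have h5 := (Complex.continuous_re.tendsto _).comp h4
  rw [show Real.sinh s = (Complex.sinh (s:ℂ)).re from (Complex.sinh_ofReal_re s).symm]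
  exact h5.congr fun n => Complex.ofReal_re _

/-- normalized sinh -/
noncomputable def sinhc (s : ℝ) : ℝ := if s = 0 then 1 else Real.sinh s / s

lemma sinhc_zero : sinhc 0 = 1 := if_pos rfl

lemma sinhc_of_ne (s : ℝ) (hs : s ≠ 0) : sinhc s = Real.sinh s / s := if_neg hs

lemma sinhc_pos (s : ℝ) : 0 < sinhc s := by
  unfold sinhc
  split
  · norm_num
  · rename_i hs
    rcases lt_or_gt_of_ne hs with h | h
    · refine div_pos_of_neg_of_neg ?_ h
      rw [← Real.sinh_zero]
      exact Real.sinh_lt_sinh.mpr h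
    · exact div_pos (by positivity) h

lemma continuous_sinhc : Continuous sinhc := by
  rw [continuous_iff_continuousAt]
  intro x
  by_cases hx : x = 0
  · subst hx
    have T1 : Tendsto sinhc (nhdsWithin 0 {(0:ℝ)}ᶜ) (nhds 1) := by
      have hd := hasDerivAt_iff_tendsto_slope.mp (Real.hasDerivAt_sinh 0)
      rw [Real.cosh_zero] at hd
      refine hd.congr' ?_
      filter_upwards [self_mem_nhdsWithin] with s hs
      have hs' : s ≠ 0 := hs
      rw [slope_def_field, sinhc_of_ne s hs', Real.sinh_zero, sub_zero, sub_zero]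
    rw [ContinuousAt, ← nhdsNE_sup_pure (0:ℝ), sinhc_zero]
    rw [Filter.tendsto_sup]
    refine ⟨T1, ?_⟩
    simpa [sinhc_zero] using tendsto_pure_nhds sinhc 0
  · have h1 : ContinuousAt (fun s => Real.sinh s / s) x :=
      (Real.continuous_sinh.continuousAt).div continuousAt_id hx
    refine h1.congr ?_
    filter_upwards [isOpen_compl_singleton.mem_nhds hx] with s hs
    exact (sinhc_of_ne s hs).symm

lemma sinh_exp_ne (s : ℝ) (hs : s ≠ 0) : Real.exp s - (Real.exp s)⁻¹ ≠ 0 := by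
  rw [← Real.exp_neg, sub_ne_zero, Ne, Real.exp_eq_exp]
  intro h; apply hs; linarith

lemma exp_sq_ne_one (s : ℝ) (hs : s ≠ 0) : Real.exp s * Real.exp s ≠ 1 := by
  rw [← Real.exp_add, Ne, Real.exp_eq_one_iff]
  intro h; apply hs; linarith

set_option maxHeartbeats 1600000 in
lemma key_alg (α β t : ℝ) (hα1 : 1/2 ≤ α) (hα2 : α ≤ 1) (hβ1 : 1/2 ≤ β) (hβ2 : β < 1)
    (ht : t ≠ 0) :
    Hmean α (Real.exp (2*t)) 1 / Mmean β (Real.exp (2*t)) 1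
      = (sinhc t * sinhc ((1-β)*t)) / (sinhc (2*α*t) * sinhc (β*t)) := by
  have hα : α ≠ 0 := by intro h; rw [h] at hα1; norm_num at hα1
  have hβ0 : β ≠ 0 := by intro h; rw [h] at hβ1; norm_num at hβ1
  have hβm1 : β - 1 ≠ 0 := sub_ne_zero.mpr (ne_of_lt hβ2)
  have h1β : (1:ℝ) - β ≠ 0 := sub_ne_zero.mpr (ne_of_gt hβ2)
  have hαt : α*t ≠ 0 := mul_ne_zero hα ht
  have hβt : β*t ≠ 0 := mul_ne_zero hβ0 ht
  have h2αt : 2*α*t ≠ 0 := mul_ne_zero (mul_ne_zero two_ne_zero hα) ht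
  have h1βt : (1-β)*t ≠ 0 := mul_ne_zero h1β ht
  have h2t : (2:ℝ)*t ≠ 0 := mul_ne_zero two_ne_zero ht
  have hx1 : ¬ (Real.exp (2*t) = 1) := by rw [Real.exp_eq_one_iff]; exact h2t
  -- rpow to exp
  have hxa : Real.exp (2*t) ^ α = Real.exp (α*t) * Real.exp (α*t) := by
    rw [Real.rpow_def_of_pos (Real.exp_pos _), Real.log_exp,
      show 2*t*α = α*t + α*t from by ring, Real.exp_add]
  have hxb : Real.exp (2*t) ^ β = Real.exp (β*t) * Real.exp (β*t) := by
    rw [Real.rpow_def_of_pos (Real.exp_pos _), Real.log_exp,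
      show 2*t*β = β*t + β*t from by ring, Real.exp_add]
  have hxb1 : Real.exp (2*t) ^ (β-1)
      = (Real.exp (β*t) * Real.exp (β*t)) / (Real.exp t * Real.exp t) := by
    rw [Real.rpow_def_of_pos (Real.exp_pos _), Real.log_exp,
      show 2*t*(β-1) = (β*t + β*t) - (t + t) from by ring, Real.exp_sub,
      Real.exp_add, Real.exp_add]
  have hx2t : Real.exp (2*t) = Real.exp t * Real.exp t := by
    rw [show (2:ℝ)*t = t + t from by ring, Real.exp_add]
  rw [Hmean, Mmean, if_neg hx1, if_neg hα, if_neg hx1]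
  rw [mul_one]
  simp only [Real.one_rpow]
  rw [hxa, hxb, hxb1]
  rw [sinhc_of_ne t ht, sinhc_of_ne _ h1βt, sinhc_of_ne _ h2αt, sinhc_of_ne _ hβt]
  rw [Real.sinh_eq, Real.sinh_eq, Real.sinh_eq, Real.sinh_eq]
  rw [Real.exp_neg, Real.exp_neg, Real.exp_neg, Real.exp_neg]
  rw [show (1-β)*t = t - β*t from by ring, Real.exp_sub,
    show 2*α*t = α*t + α*t from by ring, Real.exp_add, hx2t]
  -- nonzero facts
  have hU0 : Real.exp t ≠ 0 := (Real.exp_pos t).ne'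
  have hV0 : Real.exp (α*t) ≠ 0 := (Real.exp_pos _).ne'
  have hW0 : Real.exp (β*t) ≠ 0 := (Real.exp_pos _).ne'
  have hs1 : Real.exp t - (Real.exp t)⁻¹ ≠ 0 := sinh_exp_ne t ht
  have hs2 : Real.exp (β*t) - (Real.exp (β*t))⁻¹ ≠ 0 := sinh_exp_ne _ hβt
  have hs3 : Real.exp (α*t) * Real.exp (α*t)
      - (Real.exp (α*t) * Real.exp (α*t))⁻¹ ≠ 0 := by
    rw [← Real.exp_add]
    exact sinh_exp_ne _ (by simpa using mul_ne_zero two_ne_zero hαt)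
  have hs4 : Real.exp t / Real.exp (β*t) - (Real.exp t / Real.exp (β*t))⁻¹ ≠ 0 := by
    rw [← Real.exp_sub]
    exact sinh_exp_ne _ (sub_ne_zero.mpr fun h => h1βt (by rw [sub_mul, one_mul]; linarith))
  have hsq1 : Real.exp (α*t) * Real.exp (α*t) - 1 ≠ 0 :=
    sub_ne_zero.mpr (exp_sq_ne_one _ hαt)
  have hsq1' : Real.exp (α*t) * Real.exp (α*t) + 1 ≠ 0 := by positivity
  have hsq2 : Real.exp (β*t) * Real.exp (β*t) - 1 ≠ 0 :=
    sub_ne_zero.mpr (exp_sq_ne_one _ hβt)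
  have hsq3 : (Real.exp (β*t) * Real.exp (β*t)) / (Real.exp t * Real.exp t) - 1 ≠ 0 := by
    rw [← Real.exp_add, ← Real.exp_add, ← Real.exp_sub]
    refine sub_ne_zero.mpr ?_
    rw [Ne, Real.exp_eq_one_iff]
    intro h
    have h' : (β-1)*(2*t) = 0 := by linarith
    rcases mul_eq_zero.mp h' with h'' | h''
    · exact hβm1 h''
    · exact h2t h''
  have hVV4 : (Real.exp (α*t) * Real.exp (α*t)) * (Real.exp (α*t) * Real.exp (α*t)) - 1 ≠ 0 := by
    refine sub_ne_zero.mpr ?_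
    rw [← Real.exp_add, ← Real.exp_add, Ne, Real.exp_eq_one_iff]
    intro h
    apply hαt
    linarith
  have hWU : Real.exp (β*t) * Real.exp (β*t) - Real.exp t * Real.exp t ≠ 0 := by
    refine sub_ne_zero.mpr ?_
    rw [← Real.exp_add, ← Real.exp_add, Ne, Real.exp_eq_exp]
    intro h
    have h' : (β-1)*(2*t) = 0 := by linarith
    rcases mul_eq_zero.mp h' with h'' | h''
    · exact hβm1 h''
    · exact h2t h''
  set U := Real.exp t with hU
  set V := Real.exp (α*t) with hV
  set W := Real.exp (β*t) with hW
  have hαt2 : α*t+α*t ≠ 0 := fun h => hαt (by linarith)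
  have h1βt' : t - β*t ≠ 0 := by
    intro h; apply h1βt; rw [sub_mul, one_mul]; linarith
  have e1 : (U - U⁻¹)/2/t = (U*U - 1)/(2*U*t) := by
    field_simp
  have e2 : (U/W - (U/W)⁻¹)/2/(t - β*t) = (U*U - W*W)/(2*U*W*(t-β*t)) := by
    field_simp
  have e3 : (V*V - (V*V)⁻¹)/2/(α*t+α*t) = ((V*V)*(V*V) - 1)/(2*(V*V)*(α*t+α*t)) := by
    field_simp
  have e4 : (W - W⁻¹)/2/(β*t) = (W*W - 1)/(2*W*(β*t)) := by
    field_simp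
  have e5 : (β - 1) / β * (W*W - 1) / (W*W/(U*U) - 1)
      = ((β-1)*(W*W-1)*(U*U))/(β*(W*W-U*U)) := by
    rw [div_eq_div_iff hsq3 (mul_ne_zero hβ0 hWU)]
    field_simp
  rw [e1, e2, e3, e4, e5]
  have hB' : ((β-1)*(W*W-1)*(U*U))/(β*(W*W-U*U)) ≠ 0 :=
    div_ne_zero (mul_ne_zero (mul_ne_zero hβm1 hsq2) (mul_ne_zero hU0 hU0))
      (mul_ne_zero hβ0 hWU)
  have hY' : ((V*V)*(V*V) - 1)/(2*(V*V)*(α*t+α*t)) * ((W*W - 1)/(2*W*(β*t))) ≠ 0 :=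
    mul_ne_zero
      (div_ne_zero hVV4 (mul_ne_zero (mul_ne_zero two_ne_zero (mul_ne_zero hV0 hV0)) hαt2))
      (div_ne_zero hsq2 (mul_ne_zero (mul_ne_zero two_ne_zero hW0) hβt))
  rw [div_eq_div_iff hB' hY']
  have hWU2 : W^2 - U^2 ≠ 0 := by rwa [sq, sq]
  have hV2 : V^2 - 1 ≠ 0 := by rwa [sq]
  have hW2 : W^2 - 1 ≠ 0 := by rwa [sq]
  field_simp
  ring


theorem PD_ratio (a b m : ℝ) (ha : 0 ≤ a) (hab : a ≤ b) (hb : 0 < b) (hm : 0 < m) :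
    PD (fun t => (m^2 + a^2*t^2)/(m^2 + b^2*t^2)) := by
  have h1 : 0 ≤ a^2/b^2 := by positivity
  have h2 : 0 ≤ 1 - a^2/b^2 := by
    rw [sub_nonneg, div_le_one (by positivity)]
    nlinarith
  have heq : (fun t : ℝ => (m^2 + a^2*t^2)/(m^2 + b^2*t^2))
      = fun t : ℝ => a^2/b^2 + (1 - a^2/b^2) * (1/(1+((b/m)*t)^2)) := by
    funext t
    have hden : (0:ℝ) < m^2 + b^2*t^2 := by positivity
    have hden2 : (0:ℝ) < 1 + ((b/m)*t)^2 := by positivity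
    field_simp
    ring
  rw [heq]
  exact PD.add (PD.const h1) (PD.mul (PD.const h2) (PD_base.scale (b/m)))

lemma prodE (a : ℝ) (ha : a ≠ 0) (t : ℝ) : Tendsto
    (fun N : ℕ => ∏ j ∈ Finset.range N, (1 + (a*t)^2/(((j:ℝ)+1)^2*Real.pi^2)))
    atTop (nhds (sinhc (a*t))) := by
  by_cases ht : t = 0
  · subst ht
    simp [sinhc_zero]
  · have hat : a*t ≠ 0 := mul_ne_zero ha ht
    have h := (euler_sinh (a*t)).const_mul (1/(a*t))
    rw [sinhc_of_ne _ hat]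
    have e : ∀ N : ℕ, (1/(a*t)) * ((a*t) * ∏ j ∈ Finset.range N,
        (1 + (a*t)^2/(((j:ℝ)+1)^2*Real.pi^2)))
        = ∏ j ∈ Finset.range N, (1 + (a*t)^2/(((j:ℝ)+1)^2*Real.pi^2)) := by
      intro N
      field_simp
      exact Finset.prod_congr rfl fun x _ => by ring
    rw [show Real.sinh (a*t)/(a*t) = (1/(a*t)) * Real.sinh (a*t) from by field_simp]
    exact h.congr e

end St14

/-- For `1/2 ≤ α ≤ 1` and `1/2 ≤ β < 1`, the function `t ↦ H_α(e^{2t},1)/M_β(e^{2t},1)`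
(with value `1` at `t = 0`) is positive definite.
(In particular for `α = 1/m`, `β = m/(m+1)`, `m ∈ {1,2}`.) -/
theorem statement14 (α β : ℝ) (hα1 : 1 / 2 ≤ α) (hα2 : α ≤ 1) (hβ1 : 1 / 2 ≤ β) (hβ2 : β < 1)
    (φ : ℝ → ℝ) (hφ0 : φ 0 = 1)
    (hφ : ∀ t : ℝ, t ≠ 0 →
      φ t = Hmean α (Real.exp (2 * t)) 1 / Mmean β (Real.exp (2 * t)) 1) :
    IsPosDefFun φ := by
  classical
  have hα : (0:ℝ) < α := lt_of_lt_of_le (by norm_num) hα1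
  have hβ : (0:ℝ) < β := lt_of_lt_of_le (by norm_num) hβ1
  have h1β : (0:ℝ) < 1 - β := by linarith
  set Φ : ℝ → ℝ :=
    fun t => (St14.sinhc t * St14.sinhc ((1-β)*t)) / (St14.sinhc (2*α*t) * St14.sinhc (β*t))
    with hΦ
  have hΦ0 : Φ 0 = 1 := by
    rw [hΦ]
    simp [St14.sinhc_zero]
  have hφΦ : φ = Φ := by
    funext t
    by_cases ht : t = 0
    · subst ht
      rw [hφ0, hΦ0]
    · rw [hφ t ht, hΦ]
      exact St14.key_alg α β t hα1 hα2 hβ1 hβ2 ht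
  have hne : ∀ t : ℝ, St14.sinhc (2*α*t) * St14.sinhc (β*t) ≠ 0 :=
    fun t => (mul_pos (St14.sinhc_pos _) (St14.sinhc_pos _)).ne'
  constructor
  · rw [hφΦ, hΦ]
    refine Continuous.div ?_ ?_ hne
    · exact St14.continuous_sinhc.mul
        (St14.continuous_sinhc.comp (continuous_const.mul continuous_id))
    · exact (St14.continuous_sinhc.comp (continuous_const.mul continuous_id)).mul
        (St14.continuous_sinhc.comp (continuous_const.mul continuous_id))
  · rw [hφΦ]
    -- the factor functions
    set g : ℕ → ℝ → ℝ := fun j t =>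
      (((((j:ℝ)+1)*Real.pi)^2 + 1^2*t^2)/((((j:ℝ)+1)*Real.pi)^2 + (2*α)^2*t^2))
        * (((((j:ℝ)+1)*Real.pi)^2 + (1-β)^2*t^2)/((((j:ℝ)+1)*Real.pi)^2 + β^2*t^2))
      with hg
    have hPDg : ∀ j, St14.PD (g j) := by
      intro j
      have hm : (0:ℝ) < ((j:ℝ)+1)*Real.pi := by positivity
      refine St14.PD.mul ?_ ?_
      · exact St14.PD_ratio 1 (2*α) _ zero_le_one (by linarith) (by linarith) hm
      · exact St14.PD_ratio (1-β) β _ (by linarith) (by linarith) hβ hm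
    have hPDF : ∀ N, St14.PD (fun t => ∏ j ∈ Finset.range N, g j t) := by
      intro N
      induction N with
      | zero =>
        simp only [Finset.range_zero, Finset.prod_empty]
        exact St14.PD.const zero_le_one
      | succ N ih =>
        simp only [Finset.prod_range_succ]
        exact ih.mul (hPDg N)
    have hconv : ∀ t : ℝ, Tendsto (fun N => ∏ j ∈ Finset.range N, g j t) atTop
        (nhds (Φ t)) := by
      intro t
      have hsplit : ∀ N : ℕ, ∏ j ∈ Finset.range N, g j t
          = ((∏ j ∈ Finset.range N, (1 + (1*t)^2/(((j:ℝ)+1)^2*Real.pi^2)))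
              * ∏ j ∈ Finset.range N, (1 + ((1-β)*t)^2/(((j:ℝ)+1)^2*Real.pi^2)))
            / ((∏ j ∈ Finset.range N, (1 + (2*α*t)^2/(((j:ℝ)+1)^2*Real.pi^2)))
              * ∏ j ∈ Finset.range N, (1 + (β*t)^2/(((j:ℝ)+1)^2*Real.pi^2))) := by
        intro N
        rw [← Finset.prod_mul_distrib, ← Finset.prod_mul_distrib,
          ← Finset.prod_div_distrib]
        refine Finset.prod_congr rfl fun j _ => ?_
        rw [hg]
        have d1 : (0:ℝ) < (((j:ℝ)+1)*Real.pi)^2 + (2*α)^2*t^2 := by positivity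
        have d2 : (0:ℝ) < (((j:ℝ)+1)*Real.pi)^2 + β^2*t^2 := by positivity
        have d3 : (0:ℝ) < 1 + (2*α*t)^2/(((j:ℝ)+1)^2*Real.pi^2) := by positivity
        have d4 : (0:ℝ) < 1 + (β*t)^2/(((j:ℝ)+1)^2*Real.pi^2) := by positivity
        have hpos : (0:ℝ) < ((j:ℝ)+1)^2*Real.pi^2 := by positivity
        field_simp
      have h1 := St14.prodE 1 one_ne_zero t
      have h2 := St14.prodE (1-β) h1β.ne' t
      have h3 := St14.prodE (2*α) (by positivity) t
      have h4 := St14.prodE β hβ.ne' t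
      have h' : Tendsto (fun N : ℕ =>
          ((∏ j ∈ Finset.range N, (1 + (1*t)^2/(((j:ℝ)+1)^2*Real.pi^2)))
              * ∏ j ∈ Finset.range N, (1 + ((1-β)*t)^2/(((j:ℝ)+1)^2*Real.pi^2)))
            / ((∏ j ∈ Finset.range N, (1 + (2*α*t)^2/(((j:ℝ)+1)^2*Real.pi^2)))
              * ∏ j ∈ Finset.range N, (1 + (β*t)^2/(((j:ℝ)+1)^2*Real.pi^2)))) atTop
          (nhds (Φ t)) := by
        have hval : Φ t = St14.sinhc (1*t) * St14.sinhc ((1-β)*t)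
            / (St14.sinhc (2*α*t) * St14.sinhc (β*t)) := by
          simp only [hΦ, one_mul]
        rw [hval]
        exact (h1.mul h2).div (h3.mul h4) (by simpa using hne t)
      exact h'.congr fun N => (hsplit N).symm
    exact St14.PD.limit hPDF hconv
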